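/- For positive semidefinite Hermitian matrices A, B of order n with A positive semidefinite, the norm bound ‖(B - γA)_+‖ ≤ ‖B‖ holds for every γ ≥ 0, where ‖·‖ is the operator norm. -/

import Mathlib

open Matrix
open scoped ComplexOrder Matrix.Norms.L2Operator

/-- The positive part `T₊` of a Hermitian matrix. -/
noncomputable def matPosPart {n : ℕ} (T : Matrix (Fin n) (Fin n) ℂ) : Matrix (Fin n) (Fin n) ℂ :=
  cfc (fun x : ℝ => max x 0) T

lemma diag_norm_le {n : ℕ} (v : Fin n → ℂ) {c : ℝ} (hc : 0 ≤ c) (h : ∀ i, ‖v i‖ ≤ c) :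
    ‖diagonal v‖ ≤ c := by
  rw [Matrix.l2_opNorm_def]
  refine ContinuousLinearMap.opNorm_le_bound _ hc fun x => ?_
  have hx : ((Matrix.toEuclideanLin.trans LinearMap.toContinuousLinearMap (diagonal v)) x :
      EuclideanSpace ℂ (Fin n)) = (WithLp.equiv 2 _).symm (diagonal v *ᵥ (WithLp.equiv 2 _ x)) :=
    rfl
  rw [hx, EuclideanSpace.norm_eq, EuclideanSpace.norm_eq]
  rw [show c * Real.sqrt (∑ i, ‖x i‖ ^ 2) = Real.sqrt (c ^ 2 * ∑ i, ‖x i‖ ^ 2) by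
    rw [Real.sqrt_mul (by positivity), Real.sqrt_sq hc]]
  apply Real.sqrt_le_sqrt
  rw [Finset.mul_sum]
  apply Finset.sum_le_sum
  intro i _
  simp only [WithLp.equiv_symm_apply, WithLp.ofLp_toLp, WithLp.equiv_apply, mulVec_diagonal, norm_mul]
  calc (‖v i‖ * ‖x i‖) ^ 2 = ‖v i‖ ^ 2 * ‖x i‖ ^ 2 := by ring
  _ ≤ c ^ 2 * ‖x i‖ ^ 2 := by gcongr; exact h i

lemma matrix_norm_one_le {n : ℕ} : ‖(1 : Matrix (Fin n) (Fin n) ℂ)‖ ≤ 1 := by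
  rw [Matrix.cstar_norm_def, _root_.map_one]
  exact ContinuousLinearMap.norm_id_le

lemma unitary_norm_le {n : ℕ} {U : Matrix (Fin n) (Fin n) ℂ}
    (hU : U ∈ Matrix.unitaryGroup (Fin n) ℂ) : ‖U‖ ≤ 1 := by
  have h1 : ‖U‖ * ‖U‖ = ‖star U * U‖ := (CStarRing.norm_star_mul_self).symm
  have h2 : star U * U = 1 := (Matrix.mem_unitaryGroup_iff').mp hU
  nlinarith [norm_nonneg U, matrix_norm_one_le (n := n), h2 ▸ h1]

lemma eig_le {n : ℕ} {A B : Matrix (Fin n) (Fin n) ℂ} (hA : A.PosSemidef)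
    {γ : ℝ} (hγ : 0 ≤ γ) (hT : (B - γ • A).IsHermitian) (i : Fin n) :
    hT.eigenvalues i ≤ ‖B‖ := by
  set v := hT.eigenvectorBasis i with hv
  have hv1 : ‖v‖ = 1 := hT.eigenvectorBasis.orthonormal.1 i
  have h := hT.eigenvalues_eq i
  rw [sub_mulVec, Matrix.smul_mulVec, dotProduct_sub, dotProduct_smul, map_sub,
    RCLike.smul_re] at h
  have hApos : 0 ≤ RCLike.re (star ⇑v ⬝ᵥ (A *ᵥ ⇑v)) := hA.re_dotProduct_nonneg _
  have hBle : RCLike.re (star ⇑v ⬝ᵥ (B *ᵥ ⇑v)) ≤ ‖B‖ := by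
    have hinner : (inner ℂ v ((WithLp.equiv 2 _).symm (B *ᵥ ⇑v)) : ℂ) = star ⇑v ⬝ᵥ (B *ᵥ ⇑v) := by
      rw [show v = (WithLp.equiv 2 _).symm ⇑v from rfl]
      exact (EuclideanSpace.inner_eq_star_dotProduct _ _).trans (dotProduct_comm _ _)
    rw [← hinner]
    calc RCLike.re (inner ℂ v ((WithLp.equiv 2 _).symm (B *ᵥ ⇑v)) : ℂ)
        ≤ ‖(inner ℂ v ((WithLp.equiv 2 _).symm (B *ᵥ ⇑v)) : ℂ)‖ := RCLike.re_le_norm _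
      _ ≤ ‖v‖ * ‖(WithLp.equiv 2 _).symm (B *ᵥ ⇑v)‖ := norm_inner_le_norm _ _
      _ ≤ ‖v‖ * (‖B‖ * ‖v‖) := by gcongr; exact Matrix.l2_opNorm_mulVec B v
      _ = ‖B‖ := by rw [hv1]; ring
  have := mul_nonneg hγ hApos
  linarith [h]

lemma conj_norm_le {n : ℕ} {U D : Matrix (Fin n) (Fin n) ℂ}
    (hU : U ∈ Matrix.unitaryGroup (Fin n) ℂ) {c : ℝ} (hc : 0 ≤ c) (hD : ‖D‖ ≤ c) :
    ‖U * D * star U‖ ≤ c := by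
  have hUn : ‖U‖ ≤ 1 := unitary_norm_le hU
  have hUsn : ‖star U‖ ≤ 1 := by
    rw [Matrix.star_eq_conjTranspose]
    calc ‖Uᴴ‖ = ‖U‖ := Matrix.l2_opNorm_conjTranspose U
      _ ≤ 1 := hUn
  have hDn : (0:ℝ) ≤ ‖D‖ := norm_nonneg _
  calc ‖U * D * star U‖ ≤ ‖U * D‖ * ‖star U‖ := Matrix.l2_opNorm_mul _ _
    _ ≤ ‖U‖ * ‖D‖ * ‖star U‖ := by
        apply mul_le_mul_of_nonneg_right (Matrix.l2_opNorm_mul _ _) (norm_nonneg _)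
    _ ≤ 1 * c * 1 := by
        apply mul_le_mul _ hUsn (norm_nonneg _) (by linarith)
        exact mul_le_mul hUn hD hDn zero_le_one
    _ = c := by ring

/-- for positive semidefinite Hermitian `A, B`, `‖(B - γA)₊‖ ≤ ‖B‖` for every
`γ ≥ 0`, where `‖·‖` is the operator norm. -/
theorem posPart_norm_bound {n : ℕ} (A B : Matrix (Fin n) (Fin n) ℂ)
    (hA : A.PosSemidef) (hB : B.PosSemidef) :
    ∀ γ : ℝ, 0 ≤ γ → ‖matPosPart (B - γ • A)‖ ≤ ‖B‖ := by
  intro γ hγ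
  have hT : (B - γ • A).IsHermitian := by
    refine hB.1.sub ?_
    rw [Matrix.IsHermitian, Matrix.conjTranspose_smul, star_trivial, hA.1]
  rw [matPosPart, hT.cfc_eq, Matrix.IsHermitian.cfc]
  have hBn : (0:ℝ) ≤ ‖B‖ := norm_nonneg _
  refine conj_norm_le (SetLike.coe_mem _) hBn ?_
  refine diag_norm_le _ hBn fun i => ?_
  simp only [Function.comp_apply]
  rw [RCLike.norm_ofReal, abs_of_nonneg (le_max_right (hT.eigenvalues i) 0)]
  exact max_le (eig_le hA hγ hT i) hBn
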